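/- (Zaslavsky) Let 𝒜 = {H₁, …, Hₙ} be an arrangement of affine hyperplanes in ℝ^ℓ. Then the number of chambers of 𝒜 satisfies #ch(𝒜) = (−1)^ℓ χ(𝒜, −1). -/

import Mathlib

/-- A subset of a vector space is an affine hyperplane if it is the level set of a
nonzero linear form. -/
def IsAffineHyperplane (𝕂 : Type*) {V : Type*} [Field 𝕂] [AddCommGroup V] [Module 𝕂 V]
    (S : Set V) : Prop :=
  ∃ (α : V →ₗ[𝕂] 𝕂) (b : 𝕂), α ≠ 0 ∧ S = {x | α x = b}

open Classical in
/-- The intersection poset of an arrangement `H` inside the ambient space `W`: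
the collection of all nonempty intersections `W ∩ ⋂ i ∈ I, H i` (for `I = ∅` this is `W`). -/
noncomputable def interPoset {V : Type*} {ι : Type*} [Fintype ι] (W : Set V) (H : ι → Set V) :
    Finset (Set V) :=
  ((Finset.univ : Finset (Finset ι)).image fun I => W ∩ ⋂ i ∈ I, H i).filter fun X => X.Nonempty

open Classical in
/-- The Möbius function of the intersection poset `L`, ordered by reverse inclusion,
with minimal element `W`:  `μ W = 1` and `μ X = - ∑_{Z < X} μ Z`, where `Z < X` means
`Z ⊋ X` (as sets). -/
noncomputable def mobiusIn {V : Type*} (L : Finset (Set V)) (W : Set V) (X : Set V) : ℤ :=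
  if X = W then 1
  else - ∑ Z ∈ (L.filter fun Z => X ⊂ Z).attach,
    mobiusIn L W Z.1
termination_by (L.filter fun Z => X ⊂ Z).card
decreasing_by
  have hZ : Z.1 ∈ L.filter fun Y => X ⊂ Y := Z.2
  rw [Finset.mem_filter] at hZ
  apply Finset.card_lt_card
  rw [Finset.ssubset_iff_of_subset]
  · refine ⟨Z.1, Finset.mem_filter.mpr ⟨hZ.1, hZ.2⟩, ?_⟩
    intro hmem
    exact (lt_irrefl _ (Finset.mem_filter.mp hmem).2)
  · intro Y hY
    rw [Finset.mem_filter] at hY ⊢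
    exact ⟨hY.1, hZ.2.trans hY.2⟩

/-- The dimension of a subset of a vector space, as the dimension of its affine span. -/
noncomputable def affDim (𝕂 : Type*) {V : Type*} [Field 𝕂] [AddCommGroup V] [Module 𝕂 V]
    (X : Set V) : ℕ :=
  Module.finrank 𝕂 (affineSpan 𝕂 X).direction

/-- The characteristic polynomial `χ(𝒜, t) = ∑_{X ∈ L(𝒜)} μ(X) t^{dim X}` of the
arrangement `H` in the ambient affine space `W`. -/
noncomputable def charPoly (𝕂 : Type*) {V : Type*} [Field 𝕂] [AddCommGroup V] [Module 𝕂 V]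
    {ι : Type*} [Fintype ι] (W : Set V) (H : ι → Set V) : Polynomial ℤ :=
  ∑ X ∈ interPoset W H,
    Polynomial.C (mobiusIn (interPoset W H) W X) * Polynomial.X ^ affDim 𝕂 X

/-- The set of chambers of a real arrangement: the connected components of the
complement of the union of the hyperplanes. -/
def chambersOf {V : Type*} [TopologicalSpace V] {ι : Type*} (H : ι → Set V) :
    Set (Set V) :=
  {C | ∃ x ∈ (⋃ i, H i)ᶜ, C = connectedComponentIn (⋃ i, H i)ᶜ x}

open scoped Classical

noncomputable section ZasAux

variable {V : Type*} [AddCommGroup V] [Module ℝ V]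

/-- The open sign cell of sign pattern `P ⊆ E` inside ambient set `K`. -/
def zCell {ι : Type*} (α : ι → (V →ₗ[ℝ] ℝ)) (b : ι → ℝ) (K : Set V) (E P : Finset ι) :
    Set V :=
  {x | x ∈ K ∧ ∀ i ∈ E, if i ∈ P then b i < α i x else α i x < b i}

/-- The level set of a linear form is an affine subspace. -/
def levelAff (α : V →ₗ[ℝ] ℝ) (b : ℝ) : AffineSubspace ℝ V where
  carrier := {x | α x = b}
  smul_vsub_vadd_mem' := by
    intro c p1 p2 p3 h1 h2 h3
    simp only [Set.mem_setOf_eq, vsub_eq_sub, vadd_eq_add, map_add, map_smul, map_sub,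
      smul_eq_mul] at *
    rw [h1, h2, h3]; ring

lemma levelAff_coe (α : V →ₗ[ℝ] ℝ) (b : ℝ) : (levelAff α b : Set V) = {x | α x = b} := rfl

lemma levelAff_direction (α : V →ₗ[ℝ] ℝ) (b : ℝ) {z : V} (hz : α z = b) :
    (levelAff α b).direction = LinearMap.ker α := by
  ext v
  rw [AffineSubspace.mem_direction_iff_eq_vsub ⟨z, hz⟩]
  constructor
  · rintro ⟨p1, h1, p2, h2, rfl⟩
    simp only [LinearMap.mem_ker, vsub_eq_sub, map_sub]
    have h1' : α p1 = b := h1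
    have h2' : α p2 = b := h2
    rw [h1', h2', sub_self]
  · intro hv
    refine ⟨v + z, ?_, z, hz, ?_⟩
    · show α (v + z) = b
      rw [map_add, LinearMap.mem_ker.mp hv, zero_add, hz]
    · rw [vsub_eq_sub, add_sub_cancel_right]

lemma dim_inf_level [FiniteDimensional ℝ V] (K : AffineSubspace ℝ V) (α : V →ₗ[ℝ] ℝ) (b : ℝ)
    {z w : V} (hz : z ∈ K) (hzb : α z = b) (hw : w ∈ K) (hwb : α w ≠ b) :
    Module.finrank ℝ (K ⊓ levelAff α b).direction + 1 = Module.finrank ℝ K.direction := by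
  have hz' : z ∈ levelAff α b := hzb
  rw [AffineSubspace.direction_inf_of_mem hz hz', levelAff_direction α b hzb]
  set W := K.direction with hW
  have hu : w -ᵥ z ∈ W := AffineSubspace.vsub_mem_direction hw hz
  have huα : α (w -ᵥ z) ≠ 0 := by
    rw [vsub_eq_sub, map_sub, hzb, sub_ne_zero]; exact hwb
  set φ := α.domRestrict W with hφ
  have hker : LinearMap.ker φ = Submodule.comap W.subtype (W ⊓ LinearMap.ker α) := by
    rw [hφ, LinearMap.ker_domRestrict, Submodule.comap_inf, Submodule.comap_subtype_self,
      top_inf_eq]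
  have hrange : Module.finrank ℝ (LinearMap.range φ) = 1 := by
    have h1 : LinearMap.range φ ≠ ⊥ := by
      intro h
      have : φ ⟨w -ᵥ z, hu⟩ = 0 := by
        have := LinearMap.mem_range_self φ ⟨w -ᵥ z, hu⟩
        rw [h, Submodule.mem_bot] at this; exact this
      exact huα this
    have hle : Module.finrank ℝ (LinearMap.range φ) ≤ 1 := by
      have := Submodule.finrank_le (LinearMap.range φ)
      simpa using this
    have hpos : 0 < Module.finrank ℝ (LinearMap.range φ) := by
      rw [Module.finrank_pos_iff]
      exact (Submodule.nontrivial_iff_ne_bot).mpr h1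
    omega
  have hrn := LinearMap.finrank_range_add_finrank_ker φ
  have hkerrank : Module.finrank ℝ (LinearMap.ker φ) =
      Module.finrank ℝ (W ⊓ LinearMap.ker α : Submodule ℝ V) := by
    rw [hker]
    exact LinearEquiv.finrank_eq (Submodule.comapSubtypeEquivOfLe inf_le_left)
  omega


variable {ι : Type*} {α : ι → (V →ₗ[ℝ] ℝ)} {b : ι → ℝ}

lemma zCell_subset {K : Set V} {E P : Finset ι} : zCell α b K E P ⊆ K := fun _ h => h.1

lemma zCell_mono {K K' : Set V} {E E' P : Finset ι} (hK : K ⊆ K') (hE : E' ⊆ E) :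
    zCell α b K E P ⊆ zCell α b K' E' P :=
  fun x hx => ⟨hK hx.1, fun i hi => hx.2 i (hE hi)⟩

lemma zCell_convex {K : Set V} (hK : Convex ℝ K) (E P : Finset ι) :
    Convex ℝ (zCell α b K E P) := by
  have : zCell α b K E P = K ∩ ⋂ i ∈ E, {x | if i ∈ P then b i < α i x else α i x < b i} := by
    ext x
    simp [zCell, Set.mem_iInter]
  rw [this]
  refine hK.inter (convex_iInter fun i => convex_iInter fun _ => ?_)
  by_cases hiP : i ∈ P
  · simp only [hiP, if_true]
    exact convex_halfSpace_gt (LinearMap.isLinear (α i)) (b i)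
  · simp only [hiP, if_false]
    exact convex_halfSpace_lt (LinearMap.isLinear (α i)) (b i)

/-- membership in a cell with a pattern restricted along insert -/
lemma mem_zCell_insert {K : Set V} {E P : Finset ι} {j : ι} (hj : j ∉ E) (hP : P ⊆ E) {x : V} :
    (x ∈ zCell α b K (insert j E) (insert j P) ↔ x ∈ zCell α b K E P ∧ b j < α j x) ∧
    (x ∈ zCell α b K (insert j E) P ↔ x ∈ zCell α b K E P ∧ α j x < b j) := by
  have hjP : j ∉ P := fun h => hj (hP h)
  constructor
  · constructor
    · rintro ⟨hxK, hcond⟩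
      refine ⟨⟨hxK, fun i hi => ?_⟩, ?_⟩
      · have := hcond i (Finset.mem_insert_of_mem hi)
        have hne : i ≠ j := fun h => hj (h ▸ hi)
        by_cases hiP : i ∈ P
        · simpa [hiP, Finset.mem_insert, hne] using this
        · simpa [hiP, Finset.mem_insert, hne] using this
      · have := hcond j (Finset.mem_insert_self j E)
        simpa using this
    · rintro ⟨⟨hxK, hcond⟩, hbj⟩
      refine ⟨hxK, fun i hi => ?_⟩
      rcases Finset.mem_insert.mp hi with rfl | hi
      · simpa using hbj
      · have hne : i ≠ j := fun h => hj (h ▸ hi)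
        have := hcond i hi
        by_cases hiP : i ∈ P
        · simpa [hiP, Finset.mem_insert, hne] using this
        · simpa [hiP, Finset.mem_insert, hne] using this
  · constructor
    · rintro ⟨hxK, hcond⟩
      refine ⟨⟨hxK, fun i hi => ?_⟩, ?_⟩
      · exact hcond i (Finset.mem_insert_of_mem hi)
      · have := hcond j (Finset.mem_insert_self j E)
        simpa [hjP] using this
    · rintro ⟨⟨hxK, hcond⟩, hbj⟩
      refine ⟨hxK, fun i hi => ?_⟩
      rcases Finset.mem_insert.mp hi with rfl | hi
      · simpa [hjP] using hbj
      · exact hcond i hi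

/-- Perturbation lemma: from a point of a cell one can move a little in any direction
of `K` and stay in the cell. -/
lemma zCell_perturb (K : AffineSubspace ℝ V) (E P : Finset ι) {z : V}
    (hz : z ∈ zCell α b (K : Set V) E P) {v : V} (hv : v ∈ K.direction) :
    ∃ t : ℝ, 0 < t ∧ ∀ u : ℝ, |u| ≤ t → z + u • v ∈ zCell α b (K : Set V) E P := by
  set T : Finset ℝ := insert 1 (E.image fun i => |α i z - b i| / (|α i v| + 1)) with hT
  have hTne : T.Nonempty := ⟨1, Finset.mem_insert_self _ _⟩
  set m := T.min' hTne with hm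
  have hmpos : 0 < m := by
    rw [hm]
    apply (Finset.lt_min'_iff T hTne).mpr
    intro y hy
    rcases Finset.mem_insert.mp hy with rfl | hy
    · norm_num
    · obtain ⟨i, hi, rfl⟩ := Finset.mem_image.mp hy
      apply div_pos
      · rw [abs_pos, sub_ne_zero]
        have := hz.2 i hi
        by_cases hiP : i ∈ P
        · rw [if_pos hiP] at this; exact ne_of_gt this
        · rw [if_neg hiP] at this; exact ne_of_lt this
      · positivity
  refine ⟨m / 2, by positivity, fun u hu => ?_⟩
  constructor
  · have : (u • v) +ᵥ z ∈ K := AffineSubspace.vadd_mem_of_mem_direction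
      (Submodule.smul_mem _ u hv) hz.1
    simpa [add_comm] using this
  · intro i hi
    have hkey : |u * α i v| < |α i z - b i| := by
      have h1 : m ≤ |α i z - b i| / (|α i v| + 1) :=
        Finset.min'_le T _ (Finset.mem_insert_of_mem (Finset.mem_image_of_mem _ hi))
      have h2 : |u| * (|α i v| + 1) < |α i z - b i| := by
        have hd : (0:ℝ) < |α i v| + 1 := by positivity
        calc |u| * (|α i v| + 1) ≤ (m/2) * (|α i v| + 1) := by
              apply mul_le_mul_of_nonneg_right hu (le_of_lt hd)
          _ < m * (|α i v| + 1) := by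
              apply mul_lt_mul_of_pos_right _ hd
              linarith
          _ ≤ (|α i z - b i| / (|α i v| + 1)) * (|α i v| + 1) := by
              apply mul_le_mul_of_nonneg_right h1 (le_of_lt hd)
          _ = |α i z - b i| := div_mul_cancel₀ _ (ne_of_gt hd)
      calc |u * α i v| = |u| * |α i v| := abs_mul _ _
        _ ≤ |u| * (|α i v| + 1) := by
            apply mul_le_mul_of_nonneg_left _ (abs_nonneg u); linarith
        _ < |α i z - b i| := h2
    have hval : α i (z + u • v) = α i z + u * α i v := by
      rw [map_add, map_smul, smul_eq_mul]
    have := hz.2 i hi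
    by_cases hiP : i ∈ P
    · rw [if_pos hiP] at this ⊢
      rw [hval]
      have habs : |α i z - b i| = α i z - b i := abs_of_pos (by linarith)
      rw [habs] at hkey
      have := neg_abs_le (u * α i v)
      linarith
    · rw [if_neg hiP] at this ⊢
      rw [hval]
      have habs : |α i z - b i| = -(α i z - b i) := abs_of_neg (by linarith)
      rw [habs] at hkey
      have := le_abs_self (u * α i v)
      linarith

/-- Intermediate value on a segment of a convex cell. -/
lemma zCell_ivt {K : Set V} (hK : Convex ℝ K) {E P : Finset ι} {x y : V}
    (hx : x ∈ zCell α b K E P) (hy : y ∈ zCell α b K E P) (j : ι)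
    (hxj : α j x < b j) (hyj : b j < α j y) :
    ∃ z ∈ zCell α b K E P, α j z = b j := by
  have hC := zCell_convex hK E P (α := α) (b := b)
  set t := (b j - α j x) / (α j y - α j x) with ht
  have hd : 0 < α j y - α j x := by linarith
  have ht0 : 0 ≤ t := div_nonneg (by linarith) (le_of_lt hd)
  have ht1 : t ≤ 1 := by
    rw [ht, div_le_one hd]; linarith
  refine ⟨(1 - t) • x + t • y, hC hx hy (by linarith) ht0 (by ring), ?_⟩
  rw [map_add, map_smul, map_smul, smul_eq_mul, smul_eq_mul, ht]
  field_simp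
  ring

section Halves

lemma zCell_inter_level {K : Set V} {E P : Finset ι} {j : ι} :
    zCell α b (K ∩ {x | α j x = b j}) E P = zCell α b K E P ∩ {x | α j x = b j} := by
  ext x
  constructor
  · rintro ⟨⟨hK, hL⟩, hcond⟩; exact ⟨⟨hK, hcond⟩, hL⟩
  · rintro ⟨⟨hK, hcond⟩, hL⟩; exact ⟨⟨hK, hL⟩, hcond⟩

lemma halves_count (K : AffineSubspace ℝ V) {j : ι} {E P : Finset ι} (hj : j ∉ E) (hP : P ⊆ E)
    (hKj : ∃ w ∈ (K : Set V), α j w ≠ b j) :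
    ((if (zCell α b (K : Set V) (insert j E) (insert j P)).Nonempty then (1:ℤ) else 0)
      + if (zCell α b (K : Set V) (insert j E) P).Nonempty then (1:ℤ) else 0)
    = (if (zCell α b (K : Set V) E P).Nonempty then (1:ℤ) else 0)
      + (if (zCell α b ((K : Set V) ∩ {x | α j x = b j}) E P).Nonempty then (1:ℤ) else 0) := by
  have hins := fun (x : V) => mem_zCell_insert (K := (K : Set V)) (α := α) (b := b)
    (P := P) hj hP (x := x)
  by_cases hC : (zCell α b (K : Set V) E P).Nonempty
  · by_cases hm : (zCell α b ((K : Set V) ∩ {x | α j x = b j}) E P).Nonempty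
    · -- the cell meets the hyperplane: both halves nonempty
      obtain ⟨z, hz⟩ := hm
      rw [zCell_inter_level] at hz
      obtain ⟨hzC, hzj⟩ := hz
      obtain ⟨w, hw, hwb⟩ := hKj
      have hv : w -ᵥ z ∈ K.direction :=
        AffineSubspace.vsub_mem_direction hw (zCell_subset hzC)
      have hαv : α j (w -ᵥ z) ≠ 0 := by
        rw [vsub_eq_sub, map_sub, hzj, sub_ne_zero]; exact hwb
      obtain ⟨t, ht, hmem⟩ := zCell_perturb K E P hzC hv
      have h1 : z + t • (w -ᵥ z) ∈ zCell α b (K : Set V) E P :=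
        hmem t (by rw [abs_of_pos ht])
      have h2 : z + (-t) • (w -ᵥ z) ∈ zCell α b (K : Set V) E P :=
        hmem (-t) (by rw [abs_neg, abs_of_pos ht])
      have hval1 : α j (z + t • (w -ᵥ z)) = b j + t * α j (w -ᵥ z) := by
        rw [map_add, map_smul, smul_eq_mul, hzj]
      have hval2 : α j (z + (-t) • (w -ᵥ z)) = b j + (-t) * α j (w -ᵥ z) := by
        rw [map_add, map_smul, smul_eq_mul, hzj]
      have hboth : (zCell α b (K : Set V) (insert j E) (insert j P)).Nonempty ∧
          (zCell α b (K : Set V) (insert j E) P).Nonempty := by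
        rcases lt_or_gt_of_ne hαv with hneg | hpos
        · constructor
          · exact ⟨_, (hins _).1.mpr ⟨h2, by rw [hval2]; nlinarith⟩⟩
          · exact ⟨_, (hins _).2.mpr ⟨h1, by rw [hval1]; nlinarith⟩⟩
        · constructor
          · exact ⟨_, (hins _).1.mpr ⟨h1, by rw [hval1]; nlinarith⟩⟩
          · exact ⟨_, (hins _).2.mpr ⟨h2, by rw [hval2]; nlinarith⟩⟩
      have c1 : (if (zCell α b (K : Set V) (insert j E) (insert j P)).Nonempty then (1:ℤ) else 0) = 1 := if_pos hboth.1
      have c2 : (if (zCell α b (K : Set V) (insert j E) P).Nonempty then (1:ℤ) else 0) = 1 := if_pos hboth.2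
      have c3 : (if (zCell α b (K : Set V) E P).Nonempty then (1:ℤ) else 0) = 1 := if_pos hC
      have c4 : (if (zCell α b ((K : Set V) ∩ {x | α j x = b j}) E P).Nonempty then (1:ℤ) else 0) = 1 := if_pos (by
        rw [zCell_inter_level]; exact ⟨z, hzC, hzj⟩)
      rw [c1, c2, c3, c4]
    · -- the cell misses the hyperplane: exactly one half nonempty
      have hno : ∀ z ∈ zCell α b (K : Set V) E P, α j z ≠ b j := by
        intro z hz hzj
        exact hm ⟨z, by rw [zCell_inter_level]; exact ⟨hz, hzj⟩⟩
      obtain ⟨x, hx⟩ := hC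
      have c3 : (if (zCell α b (K : Set V) E P).Nonempty then (1:ℤ) else 0) = 1 := if_pos ⟨x, hx⟩
      have c4 : (if (zCell α b ((K : Set V) ∩ {x | α j x = b j}) E P).Nonempty then (1:ℤ) else 0) = 0 := if_neg hm
      rcases lt_or_gt_of_ne (hno x hx) with hlt | hgt
      · have hup : ¬ (zCell α b (K : Set V) (insert j E) (insert j P)).Nonempty := by
          rintro ⟨y, hy⟩
          obtain ⟨hyC, hyj⟩ := (hins y).1.mp hy
          obtain ⟨z, hzC, hzj⟩ := zCell_ivt K.convex hx hyC j hlt hyj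
          exact hno z hzC hzj
        have c1 : (if (zCell α b (K : Set V) (insert j E) (insert j P)).Nonempty then (1:ℤ) else 0) = 0 := if_neg hup
        have c2 : (if (zCell α b (K : Set V) (insert j E) P).Nonempty then (1:ℤ) else 0) = 1 := if_pos ⟨x, (hins x).2.mpr ⟨hx, hlt⟩⟩
        rw [c1, c2, c3, c4]; norm_num
      · have hdn : ¬ (zCell α b (K : Set V) (insert j E) P).Nonempty := by
          rintro ⟨y, hy⟩
          obtain ⟨hyC, hyj⟩ := (hins y).2.mp hy
          obtain ⟨z, hzC, hzj⟩ := zCell_ivt K.convex hyC hx j hyj hgt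
          exact hno z hzC hzj
        have c1 : (if (zCell α b (K : Set V) (insert j E) (insert j P)).Nonempty then (1:ℤ) else 0) = 1 := if_pos ⟨x, (hins x).1.mpr ⟨hx, hgt⟩⟩
        have c2 : (if (zCell α b (K : Set V) (insert j E) P).Nonempty then (1:ℤ) else 0) = 0 := if_neg hdn
        rw [c1, c2, c3, c4]
  · -- the cell is empty: everything is empty
    have e1 : ¬ (zCell α b (K : Set V) (insert j E) (insert j P)).Nonempty :=
      fun ⟨y, hy⟩ => hC ⟨y, ((hins y).1.mp hy).1⟩
    have e2 : ¬ (zCell α b (K : Set V) (insert j E) P).Nonempty :=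
      fun ⟨y, hy⟩ => hC ⟨y, ((hins y).2.mp hy).1⟩
    have e3 : ¬ (zCell α b ((K : Set V) ∩ {x | α j x = b j}) E P).Nonempty := by
      rw [zCell_inter_level]; exact fun ⟨y, hy⟩ => hC ⟨y, hy.1⟩
    have c1 : (if (zCell α b (K : Set V) (insert j E) (insert j P)).Nonempty then (1:ℤ) else 0) = 0 := if_neg e1
    have c2 : (if (zCell α b (K : Set V) (insert j E) P).Nonempty then (1:ℤ) else 0) = 0 := if_neg e2
    have c3 : (if (zCell α b (K : Set V) E P).Nonempty then (1:ℤ) else 0) = 0 := if_neg hC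
    have c4 : (if (zCell α b ((K : Set V) ∩ {x | α j x = b j}) E P).Nonempty then (1:ℤ) else 0) = 0 := if_neg e3
    rw [c1, c2, c3, c4]

end Halves

section Main
variable {ι : Type*}

lemma affDim_coe (K : AffineSubspace ℝ V) :
    affDim ℝ (K : Set V) = Module.finrank ℝ K.direction := by
  rw [affDim, AffineSubspace.affineSpan_coe]

lemma neg_one_pow_two_add (n : ℕ) : (-1:ℤ)^(n+2) = (-1)^n := by
  rw [pow_add]; norm_num

lemma zMain [FiniteDimensional ℝ V] (α : ι → (V →ₗ[ℝ] ℝ)) (b : ι → ℝ) (E : Finset ι) :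
    ∀ K : AffineSubspace ℝ V, (K : Set V).Nonempty →
    ((E.powerset.filter fun P => (zCell α b (K : Set V) E P).Nonempty).card : ℤ)
    = ∑ B ∈ E.powerset,
        if ((K : Set V) ∩ ⋂ i ∈ B, {x | α i x = b i}).Nonempty then
          (-1:ℤ)^(B.card + Module.finrank ℝ K.direction
            + affDim ℝ ((K : Set V) ∩ ⋂ i ∈ B, {x | α i x = b i}))
        else 0 := by
  induction E using Finset.induction_on with
  | empty =>
    intro K hK
    have h1 : zCell α b (K : Set V) ∅ ∅ = (K : Set V) := by
      ext x; simp [zCell]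
    have h2 : ⋂ i ∈ (∅ : Finset ι), {x | α i x = b i} = Set.univ := by simp
    rw [Finset.powerset_empty]
    rw [Finset.filter_true_of_mem (by
      intro P hP; rw [Finset.mem_singleton] at hP; subst hP; rw [h1]; exact hK)]
    rw [Finset.card_singleton, Finset.sum_singleton, h2, Set.inter_univ,
      if_pos hK, Finset.card_empty, affDim_coe, zero_add]
    rw [← two_mul, pow_mul]
    norm_num
  | @insert j E hj IH =>
    intro K hK
    rw [Finset.card_filter]
    push_cast
    rw [Finset.sum_powerset_insert hj, Finset.sum_powerset_insert hj]
    by_cases hsub : ∀ x ∈ (K : Set V), α j x = b j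
    · -- K is contained in the hyperplane j : both sides vanish
      have hemp : ∀ Q : Finset ι, zCell α b (K : Set V) (insert j E) Q = ∅ := by
        intro Q
        ext x
        simp only [Set.mem_empty_iff_false, iff_false]
        rintro ⟨hxK, hcond⟩
        have hj' := hcond j (Finset.mem_insert_self j E)
        have hx := hsub x hxK
        by_cases hjQ : j ∈ Q
        · rw [if_pos hjQ, hx] at hj'; exact lt_irrefl _ hj'
        · rw [if_neg hjQ, hx] at hj'; exact lt_irrefl _ hj'
      have hz1 : ∀ P ∈ E.powerset,
          (if (zCell α b (K : Set V) (insert j E) P).Nonempty then (1:ℤ) else 0) = 0 := by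
        intro P _; rw [hemp]; simp
      have hz2 : ∀ P ∈ E.powerset,
          (if (zCell α b (K : Set V) (insert j E) (insert j P)).Nonempty
            then (1:ℤ) else 0) = 0 := by
        intro P _; rw [hemp]; simp
      rw [Finset.sum_congr rfl hz1, Finset.sum_congr rfl hz2]
      have hcancel : ∀ B ∈ E.powerset,
          (if ((K : Set V) ∩ ⋂ i ∈ insert j B, {x | α i x = b i}).Nonempty then
            (-1:ℤ)^((insert j B).card + Module.finrank ℝ K.direction
              + affDim ℝ ((K : Set V) ∩ ⋂ i ∈ insert j B, {x | α i x = b i}))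
          else 0)
          = - (if ((K : Set V) ∩ ⋂ i ∈ B, {x | α i x = b i}).Nonempty then
            (-1:ℤ)^(B.card + Module.finrank ℝ K.direction
              + affDim ℝ ((K : Set V) ∩ ⋂ i ∈ B, {x | α i x = b i}))
          else 0) := by
        intro B hB
        have hjB : j ∉ B := fun h => hj (Finset.mem_powerset.mp hB h)
        have hSeq : (K : Set V) ∩ ⋂ i ∈ insert j B, {x | α i x = b i}
            = (K : Set V) ∩ ⋂ i ∈ B, {x | α i x = b i} := by
          rw [Finset.set_biInter_insert]
          ext x
          constructor
          · rintro ⟨hxK, _, hX⟩; exact ⟨hxK, hX⟩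
          · rintro ⟨hxK, hX⟩; exact ⟨hxK, hsub x hxK, hX⟩
        rw [hSeq, Finset.card_insert_of_notMem hjB]
        by_cases hne : ((K : Set V) ∩ ⋂ i ∈ B, {x | α i x = b i}).Nonempty
        · rw [if_pos hne, if_pos hne,
            show B.card + 1 + Module.finrank ℝ K.direction
              + affDim ℝ ((K : Set V) ∩ ⋂ i ∈ B, {x | α i x = b i})
              = (B.card + Module.finrank ℝ K.direction
                + affDim ℝ ((K : Set V) ∩ ⋂ i ∈ B, {x | α i x = b i})) + 1 by ring,
            pow_succ, mul_neg_one]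
        · rw [if_neg hne, if_neg hne, neg_zero]
      rw [Finset.sum_congr rfl hcancel]
      simp
    · -- there is a point of K outside the hyperplane j
      push_neg at hsub
      obtain ⟨w, hw, hwb⟩ := hsub
      -- left side : pair up the two half cells
      rw [add_comm (∑ P ∈ E.powerset, if (zCell α b (K : Set V) (insert j E) P).Nonempty
          then (1:ℤ) else 0), ← Finset.sum_add_distrib]
      have hpair : ∀ P ∈ E.powerset,
          ((if (zCell α b (K : Set V) (insert j E) (insert j P)).Nonempty then (1:ℤ) else 0)
            + if (zCell α b (K : Set V) (insert j E) P).Nonempty then (1:ℤ) else 0)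
          = (if (zCell α b (K : Set V) E P).Nonempty then (1:ℤ) else 0)
            + (if (zCell α b ((K : Set V) ∩ {x | α j x = b j}) E P).Nonempty
              then (1:ℤ) else 0) := by
        intro P hP
        exact halves_count K hj (Finset.mem_powerset.mp hP) ⟨w, hw, hwb⟩
      rw [Finset.sum_congr rfl hpair, Finset.sum_add_distrib]
      have hfirst : (∑ P ∈ E.powerset,
          if (zCell α b (K : Set V) E P).Nonempty then (1:ℤ) else 0)
          = ∑ B ∈ E.powerset,
          if ((K : Set V) ∩ ⋂ i ∈ B, {x | α i x = b i}).Nonempty then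
            (-1:ℤ)^(B.card + Module.finrank ℝ K.direction
              + affDim ℝ ((K : Set V) ∩ ⋂ i ∈ B, {x | α i x = b i}))
          else 0 := by
        rw [← IH K hK, Finset.card_filter]
        push_cast
        rfl
      rw [hfirst]
      by_cases hne : ((K : Set V) ∩ {x | α j x = b j}).Nonempty
      · -- case C : the hyperplane meets K
        obtain ⟨z, hz⟩ := hne
        set K' : AffineSubspace ℝ V := K ⊓ levelAff (α j) (b j) with hK'
        have hK'coe : (K' : Set V) = (K : Set V) ∩ {x | α j x = b j} :=
          AffineSubspace.coe_inf K (levelAff (α j) (b j))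
        have hK'ne : (K' : Set V).Nonempty := by rw [hK'coe]; exact ⟨z, hz⟩
        have hdim : Module.finrank ℝ K'.direction + 1 = Module.finrank ℝ K.direction :=
          dim_inf_level K (α j) (b j) hz.1 hz.2 hw hwb
        have hsecond : (∑ P ∈ E.powerset,
            if (zCell α b ((K : Set V) ∩ {x | α j x = b j}) E P).Nonempty
              then (1:ℤ) else 0)
            = ∑ B ∈ E.powerset,
            if ((K' : Set V) ∩ ⋂ i ∈ B, {x | α i x = b i}).Nonempty then
              (-1:ℤ)^(B.card + Module.finrank ℝ K'.direction
                + affDim ℝ ((K' : Set V) ∩ ⋂ i ∈ B, {x | α i x = b i}))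
            else 0 := by
          rw [← IH K' hK'ne, Finset.card_filter]
          push_cast
          rw [hK'coe]
        rw [hsecond]
        congr 1
        apply Finset.sum_congr rfl
        intro B hB
        have hjB : j ∉ B := fun h => hj (Finset.mem_powerset.mp hB h)
        have hSeq : (K : Set V) ∩ ⋂ i ∈ insert j B, {x | α i x = b i}
            = (K' : Set V) ∩ ⋂ i ∈ B, {x | α i x = b i} := by
          rw [Finset.set_biInter_insert, hK'coe, Set.inter_assoc]
        rw [hSeq, Finset.card_insert_of_notMem hjB]
        by_cases hne2 : ((K' : Set V) ∩ ⋂ i ∈ B, {x | α i x = b i}).Nonempty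
        · rw [if_pos hne2, if_pos hne2,
            show B.card + 1 + Module.finrank ℝ K.direction
              + affDim ℝ ((K' : Set V) ∩ ⋂ i ∈ B, {x | α i x = b i})
              = (B.card + Module.finrank ℝ K'.direction
                + affDim ℝ ((K' : Set V) ∩ ⋂ i ∈ B, {x | α i x = b i})) + 2 by
              rw [← hdim]; ring,
            neg_one_pow_two_add]
        · rw [if_neg hne2, if_neg hne2]
      · -- case A : the hyperplane misses K
        have hsecond : (∑ P ∈ E.powerset,
            if (zCell α b ((K : Set V) ∩ {x | α j x = b j}) E P).Nonempty
              then (1:ℤ) else 0) = 0 := by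
          apply Finset.sum_eq_zero
          intro P _
          rw [if_neg]
          intro hne'
          exact hne (hne'.mono (zCell_subset))
        have hthird : ∀ B ∈ E.powerset,
            (if ((K : Set V) ∩ ⋂ i ∈ insert j B, {x | α i x = b i}).Nonempty then
              (-1:ℤ)^((insert j B).card + Module.finrank ℝ K.direction
                + affDim ℝ ((K : Set V) ∩ ⋂ i ∈ insert j B, {x | α i x = b i}))
            else 0) = 0 := by
          intro B _
          rw [if_neg]
          intro hne'
          apply hne
          apply hne'.mono
          rw [Finset.set_biInter_insert]
          intro x hx
          exact ⟨hx.1, hx.2.1⟩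
        rw [hsecond, Finset.sum_congr rfl hthird]
        simp

end Main




section Mobius

variable {V : Type*} {ι : Type*} [Fintype ι] {W : Set V} {H : ι → Set V}

lemma mem_interPoset {X : Set V} :
    X ∈ interPoset W H ↔ (∃ I : Finset ι, W ∩ ⋂ i ∈ I, H i = X) ∧ X.Nonempty := by
  simp [interPoset]

lemma interPoset_subset_W {X : Set V} (hX : X ∈ interPoset W H) : X ⊆ W := by
  obtain ⟨⟨I, rfl⟩, -⟩ := mem_interPoset.mp hX
  exact Set.inter_subset_left

lemma interPoset_nonempty {X : Set V} (hX : X ∈ interPoset W H) : X.Nonempty :=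
  (mem_interPoset.mp hX).2

lemma W_mem_interPoset (hW : W.Nonempty) : W ∈ interPoset W H :=
  mem_interPoset.mpr ⟨⟨∅, by simp⟩, hW⟩

/-- The "Whitney function": the signed count of subfamilies intersecting in `X`. -/
noncomputable def fWhit (W : Set V) (H : ι → Set V) (X : Set V) : ℤ :=
  ∑ I ∈ Finset.univ.filter (fun I : Finset ι => W ∩ ⋂ i ∈ I, H i = X), (-1)^I.card

lemma my_fiberwise (t : Finset (Set V)) (f : Finset ι → ℤ) :
    ∑ Z ∈ t, ∑ I ∈ Finset.univ.filter (fun I : Finset ι => W ∩ ⋂ i ∈ I, H i = Z), f I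
      = ∑ I ∈ Finset.univ.filter (fun I : Finset ι => (W ∩ ⋂ i ∈ I, H i) ∈ t), f I := by
  rw [Finset.sum_filter]
  have : ∀ Z ∈ t, ∑ I ∈ Finset.univ.filter (fun I : Finset ι => W ∩ ⋂ i ∈ I, H i = Z), f I
      = ∑ I : Finset ι, if W ∩ ⋂ i ∈ I, H i = Z then f I else 0 :=
    fun Z _ => Finset.sum_filter _ _
  rw [Finset.sum_congr rfl this, Finset.sum_comm]
  apply Finset.sum_congr rfl
  intro I _
  by_cases hmem : (W ∩ ⋂ i ∈ I, H i) ∈ t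
  · rw [if_pos hmem]
    rw [Finset.sum_eq_single_of_mem _ hmem (fun Z _ hne => if_neg (fun h => hne h.symm))]
    rw [if_pos rfl]
  · rw [if_neg hmem]
    apply Finset.sum_eq_zero
    intro Z hZ
    apply if_neg
    intro h
    rw [h] at hmem
    exact hmem hZ

lemma filter_superset_eq_insert {X : Set V} (hX : X ∈ interPoset W H) :
    (interPoset W H).filter (fun Z => X ⊆ Z)
      = insert X ((interPoset W H).filter fun Z => X ⊂ Z) := by
  ext Z
  simp only [Finset.mem_filter, Finset.mem_insert]
  constructor
  · rintro ⟨hZ, hXZ⟩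
    rcases eq_or_ne Z X with rfl | hne
    · exact Or.inl rfl
    · exact Or.inr ⟨hZ, ssubset_of_subset_of_ne hXZ (Ne.symm hne)⟩
  · rintro (rfl | ⟨hZ, hXZ⟩)
    · exact ⟨hX, subset_rfl⟩
    · exact ⟨hZ, hXZ.subset⟩

lemma sum_mobius_upset (hW : W.Nonempty) {X : Set V} (hX : X ∈ interPoset W H) :
    ∑ Z ∈ (interPoset W H).filter (fun Z => X ⊆ Z), mobiusIn (interPoset W H) W Z
      = if X = W then 1 else 0 := by
  by_cases hXW : X = W
  · have hfil : (interPoset W H).filter (fun Z => X ⊆ Z) = {X} := by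
      ext Z
      simp only [Finset.mem_filter, Finset.mem_singleton]
      constructor
      · rintro ⟨hZ, hXZ⟩
        refine subset_antisymm ?_ hXZ
        rw [hXW]
        exact interPoset_subset_W hZ
      · rintro rfl
        exact ⟨hX, subset_rfl⟩
    rw [hfil, Finset.sum_singleton, if_pos hXW, mobiusIn, if_pos hXW]
  · rw [if_neg hXW, filter_superset_eq_insert hX,
      Finset.sum_insert (fun hmem => ssubset_irrefl X (Finset.mem_filter.mp hmem).2)]
    have hXeq : mobiusIn (interPoset W H) W X
        = - ∑ Z ∈ (interPoset W H).filter (fun Z => X ⊂ Z), mobiusIn (interPoset W H) W Z := by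
      rw [mobiusIn, if_neg hXW, Finset.sum_attach _ (fun Z => mobiusIn (interPoset W H) W Z)]
    rw [hXeq, neg_add_cancel]

lemma sum_fWhit_upset (hWH : ∀ i, ¬ W ⊆ H i) {X : Set V} (hX : X ∈ interPoset W H) :
    ∑ Z ∈ (interPoset W H).filter (fun Z => X ⊆ Z), fWhit W H Z
      = if X = W then 1 else 0 := by
  unfold fWhit
  rw [my_fiberwise ((interPoset W H).filter (fun Z => X ⊆ Z)) (fun I : Finset ι => (-1:ℤ)^I.card)]
  set J : Finset ι := Finset.univ.filter (fun i => X ⊆ H i) with hJ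
  have hcond : ∀ I : Finset ι,
      ((W ∩ ⋂ i ∈ I, H i) ∈ (interPoset W H).filter (fun Z => X ⊆ Z)) ↔ I ∈ J.powerset := by
    intro I
    rw [Finset.mem_filter, Finset.mem_powerset]
    constructor
    · rintro ⟨-, hXZ⟩
      intro i hi
      rw [hJ, Finset.mem_filter]
      refine ⟨Finset.mem_univ i, ?_⟩
      exact hXZ.trans (Set.inter_subset_right.trans (Set.biInter_subset_of_mem hi))
    · intro hIJ
      have hXsub : X ⊆ W ∩ ⋂ i ∈ I, H i := by
        apply Set.subset_inter (interPoset_subset_W hX)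
        apply Set.subset_iInter₂
        intro i hi
        have := hIJ hi
        rw [hJ, Finset.mem_filter] at this
        exact this.2
      refine ⟨mem_interPoset.mpr ⟨⟨I, rfl⟩, (interPoset_nonempty hX).mono hXsub⟩, hXsub⟩
  rw [Finset.filter_congr (fun I _ => by rw [hcond I])]
  rw [Finset.filter_mem_eq_inter, Finset.univ_inter, Finset.sum_powerset_neg_one_pow_card]
  have hJiff : J = ∅ ↔ X = W := by
    constructor
    · intro hJe
      by_contra hne
      obtain ⟨⟨I, hI⟩, hXne⟩ := mem_interPoset.mp hX
      have hIne : I ≠ ∅ := by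
        rintro rfl
        simp only [Finset.notMem_empty, Set.iInter_of_empty, Set.iInter_univ,
          Set.inter_univ] at hI
        exact hne hI.symm
      obtain ⟨i, hi⟩ := Finset.nonempty_iff_ne_empty.mpr hIne
      have : i ∈ J := by
        rw [hJ, Finset.mem_filter]
        exact ⟨Finset.mem_univ i, by
          rw [← hI]
          exact Set.inter_subset_right.trans (Set.biInter_subset_of_mem hi)⟩
      rw [hJe] at this
      exact absurd this (Finset.notMem_empty i)
    · rintro rfl
      rw [Finset.eq_empty_iff_forall_notMem]
      intro i hi
      rw [hJ, Finset.mem_filter] at hi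
      exact hWH i hi.2
  rw [if_congr hJiff rfl rfl]

lemma card_filter_ssubset_lt {X Z : Set V} (hZ : Z ∈ interPoset W H) (hXZ : X ⊂ Z) :
    ((interPoset W H).filter fun Y => Z ⊂ Y).card
      < ((interPoset W H).filter fun Y => X ⊂ Y).card := by
  apply Finset.card_lt_card
  rw [Finset.ssubset_iff_of_subset]
  · refine ⟨Z, Finset.mem_filter.mpr ⟨hZ, hXZ⟩, ?_⟩
    intro hmem
    exact (lt_irrefl _ (Finset.mem_filter.mp hmem).2)
  · intro Y hY
    rw [Finset.mem_filter] at hY ⊢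
    exact ⟨hY.1, hXZ.trans hY.2⟩

lemma mobius_eq_fWhit (hW : W.Nonempty) (hWH : ∀ i, ¬ W ⊆ H i) :
    ∀ X ∈ interPoset W H, mobiusIn (interPoset W H) W X = fWhit W H X := by
  suffices h : ∀ (k : ℕ) (X), X ∈ interPoset W H →
      ((interPoset W H).filter fun Y => X ⊂ Y).card ≤ k →
      mobiusIn (interPoset W H) W X = fWhit W H X by
    intro X hX
    exact h _ X hX le_rfl
  intro k
  induction k with
  | zero =>
    intro X hX hcard
    have hfil : (interPoset W H).filter (fun Y => X ⊂ Y) = ∅ :=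
      Finset.card_eq_zero.mp (Nat.le_zero.mp hcard)
    have h1 := sum_mobius_upset hW hX
    have h2 := sum_fWhit_upset hWH hX
    rw [filter_superset_eq_insert hX, hfil, Finset.sum_insert (Finset.notMem_empty X),
      Finset.sum_empty, add_zero] at h1 h2
    rw [h1, h2]
  | succ k IHk =>
    intro X hX hcard
    have h1 := sum_mobius_upset hW hX
    have h2 := sum_fWhit_upset hWH hX
    rw [filter_superset_eq_insert hX,
      Finset.sum_insert (fun hmem => ssubset_irrefl X (Finset.mem_filter.mp hmem).2)] at h1 h2
    have hsums : ∑ Z ∈ (interPoset W H).filter (fun Z => X ⊂ Z), mobiusIn (interPoset W H) W Z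
        = ∑ Z ∈ (interPoset W H).filter (fun Z => X ⊂ Z), fWhit W H Z := by
      apply Finset.sum_congr rfl
      intro Z hZ
      rw [Finset.mem_filter] at hZ
      apply IHk Z hZ.1
      have := card_filter_ssubset_lt hZ.1 hZ.2
      omega
    linarith [h1, h2, hsums]

end Mobius

section Whitney

variable {𝕂 : Type*} {V : Type*} [Field 𝕂] [AddCommGroup V] [Module 𝕂 V]
  {ι : Type*} [Fintype ι] {W : Set V} {H : ι → Set V}

lemma eval_charPoly (hW : W.Nonempty) (hWH : ∀ i, ¬ W ⊆ H i) :
    (charPoly 𝕂 W H).eval (-1)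
      = ∑ I ∈ Finset.univ.filter (fun I : Finset ι => (W ∩ ⋂ i ∈ I, H i).Nonempty),
          (-1:ℤ)^(I.card + affDim 𝕂 (W ∩ ⋂ i ∈ I, H i)) := by
  rw [charPoly, Polynomial.eval_finset_sum]
  simp only [Polynomial.eval_mul, Polynomial.eval_C, Polynomial.eval_pow, Polynomial.eval_X]
  rw [Finset.sum_congr rfl (fun X hX => by
    rw [mobius_eq_fWhit hW hWH X hX] :
    ∀ X ∈ interPoset W H, mobiusIn (interPoset W H) W X * (-1:ℤ)^(affDim 𝕂 X)
      = fWhit W H X * (-1:ℤ)^(affDim 𝕂 X))]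
  have step : ∀ X ∈ interPoset W H, fWhit W H X * (-1:ℤ)^(affDim 𝕂 X)
      = ∑ I ∈ Finset.univ.filter (fun I : Finset ι => W ∩ ⋂ i ∈ I, H i = X),
          (-1:ℤ)^(I.card + affDim 𝕂 (W ∩ ⋂ i ∈ I, H i)) := by
    intro X hX
    rw [fWhit, Finset.sum_mul]
    apply Finset.sum_congr rfl
    intro I hI
    rw [Finset.mem_filter] at hI
    rw [hI.2, pow_add]
  rw [Finset.sum_congr rfl step,
    my_fiberwise (interPoset W H)
      (fun I : Finset ι => (-1:ℤ)^(I.card + affDim 𝕂 (W ∩ ⋂ i ∈ I, H i)))]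
  congr 1
  apply Finset.filter_congr
  intro I _
  constructor
  · intro hmem
    exact interPoset_nonempty hmem
  · intro hne
    exact mem_interPoset.mpr ⟨⟨I, rfl⟩, hne⟩

lemma exists_not_level {α : V →ₗ[𝕂] 𝕂} (hα : α ≠ 0) (b : 𝕂) : ∃ x, α x ≠ b := by
  by_contra h
  push_neg at h
  apply hα
  have hb : b = 0 := by
    have h0 := h 0
    rw [map_zero] at h0
    exact h0.symm
  ext x
  rw [h x, hb, LinearMap.zero_apply]

end Whitney
lemma zCell_univ_eq {V : Type*} [AddCommGroup V] [Module ℝ V] {ι : Type*} [Fintype ι]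
    (α : ι → (V →ₗ[ℝ] ℝ)) (b : ι → ℝ) (P : Finset ι) :
    zCell α b (Set.univ : Set V) Finset.univ P
      = ⋂ i, {x | if i ∈ P then b i < α i x else α i x < b i} := by
  ext x
  simp [zCell, Set.mem_iInter]

variable {ℓ n : ℕ}

lemma chambers_eq_cells (α : Fin n → ((Fin ℓ → ℝ) →ₗ[ℝ] ℝ)) (b : Fin n → ℝ)
    (H : Fin n → Set (Fin ℓ → ℝ)) (hHeq : ∀ i, H i = {x | α i x = b i}) :
    Nat.card (chambersOf H) = (Finset.univ.filter fun P : Finset (Fin n) =>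
      (zCell α b Set.univ Finset.univ P).Nonempty).card := by
  set U : Set (Fin ℓ → ℝ) := (⋃ i, H i)ᶜ with hUdef
  set cell : Finset (Fin n) → Set (Fin ℓ → ℝ) :=
    fun P => zCell α b Set.univ Finset.univ P with hcell
  have hUne : ∀ x, x ∈ U ↔ ∀ i, α i x ≠ b i := by
    intro x
    simp [hUdef, hHeq]
  have hopen : ∀ P, IsOpen (cell P) := by
    intro P
    show IsOpen (zCell α b Set.univ Finset.univ P)
    rw [zCell_univ_eq α b P]
    apply isOpen_iInter_of_finite
    intro i
    by_cases hiP : i ∈ P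
    · simp only [hiP, if_true]
      exact isOpen_lt continuous_const (α i).continuous_of_finiteDimensional
    · simp only [hiP, if_false]
      exact isOpen_lt (α i).continuous_of_finiteDimensional continuous_const
  have hsubU : ∀ P, cell P ⊆ U := by
    intro P x hx
    rw [hUne]
    intro i
    have := hx.2 i (Finset.mem_univ i)
    by_cases hiP : i ∈ P
    · rw [if_pos hiP] at this; exact (ne_of_gt this)
    · rw [if_neg hiP] at this; exact (ne_of_lt this)
  have heq : ∀ (P Q : Finset (Fin n)) (x : Fin ℓ → ℝ), x ∈ cell P → x ∈ cell Q → P = Q := by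
    intro P Q x hxP hxQ
    have hsign : ∀ (R : Finset (Fin n)), x ∈ cell R → ∀ i, (i ∈ R ↔ b i < α i x) := by
      intro R hxR i
      have := hxR.2 i (Finset.mem_univ i)
      constructor
      · intro hiR; rwa [if_pos hiR] at this
      · intro hlt
        by_contra hiR
        rw [if_neg hiR] at this
        exact lt_asymm this hlt
    ext i
    rw [hsign P hxP i, hsign Q hxQ i]
  have hmemcell : ∀ x ∈ U, x ∈ cell (Finset.univ.filter (fun i => b i < α i x)) := by
    intro x hx
    refine ⟨Set.mem_univ x, fun i _ => ?_⟩
    by_cases hlt : b i < α i x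
    · rw [if_pos (Finset.mem_filter.mpr ⟨Finset.mem_univ i, hlt⟩)]
      exact hlt
    · have hiP : i ∉ Finset.univ.filter (fun k => b k < α k x) :=
        fun hmem => hlt (Finset.mem_filter.mp hmem).2
      rw [if_neg hiP]
      exact lt_of_le_of_ne (not_lt.mp hlt) ((hUne x).mp hx i)
  have hcomp : ∀ x ∈ U, connectedComponentIn U x
      = cell (Finset.univ.filter (fun i => b i < α i x)) := by
    intro x hx
    set Px := Finset.univ.filter (fun i => b i < α i x) with hPx
    have hxc : x ∈ cell Px := hmemcell x hx
    apply subset_antisymm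
    · set Vo : Set (Fin ℓ → ℝ) := ⋃ (Q : Finset (Fin n)) (_ : Q ≠ Px), cell Q with hVo
      have hVoopen : IsOpen Vo := isOpen_iUnion fun Q => isOpen_iUnion fun _ => hopen Q
      have hdisj : Disjoint (cell Px) Vo := by
        rw [Set.disjoint_left]
        intro z hz hz'
        rw [hVo, Set.mem_iUnion] at hz'
        obtain ⟨Q, hQ⟩ := hz'
        rw [Set.mem_iUnion] at hQ
        obtain ⟨hQne, hzQ⟩ := hQ
        exact hQne (heq Q Px z hzQ hz)
      have hcover : connectedComponentIn U x ⊆ cell Px ∪ Vo := by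
        intro y hy
        have hyU : y ∈ U := connectedComponentIn_subset U x hy
        by_cases hPyx : Finset.univ.filter (fun i => b i < α i y) = Px
        · left; rw [← hPyx]; exact hmemcell y hyU
        · right
          rw [hVo, Set.mem_iUnion]
          refine ⟨Finset.univ.filter (fun i => b i < α i y), ?_⟩
          rw [Set.mem_iUnion]
          exact ⟨hPyx, hmemcell y hyU⟩
      exact IsPreconnected.subset_left_of_subset_union (hopen Px) hVoopen hdisj hcover
        ⟨x, mem_connectedComponentIn hx, hxc⟩ isPreconnected_connectedComponentIn
    · exact (zCell_convex convex_univ _ _).isPreconnected.subset_connectedComponentIn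
        hxc (hsubU Px)
  have hch : chambersOf H = cell '' {P : Finset (Fin n) | (cell P).Nonempty} := by
    ext C
    constructor
    · rintro ⟨x, hx, rfl⟩
      refine ⟨Finset.univ.filter (fun i => b i < α i x), ⟨x, hmemcell x hx⟩, (hcomp x hx).symm⟩
    · rintro ⟨P, ⟨x, hxP⟩, rfl⟩
      have hxU : x ∈ U := hsubU P hxP
      have hPx : P = Finset.univ.filter (fun i => b i < α i x) :=
        heq P _ x hxP (hmemcell x hxU)
      exact ⟨x, hxU, by rw [hcomp x hxU, hPx]⟩
  rw [hch, Nat.card_coe_set_eq, Set.ncard_image_of_injOn (fun P hP Q hQ hPQ => by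
    obtain ⟨x, hxP⟩ := hP
    exact heq P Q x hxP (hPQ ▸ hxP))]
  have : {P : Finset (Fin n) | (cell P).Nonempty}
      = ↑(Finset.univ.filter fun P : Finset (Fin n) => (cell P).Nonempty) := by
    ext P
    simp
  rw [this, Set.ncard_coe_finset]


end ZasAux

/-- **Zaslavsky's theorem.** The number of chambers of a real arrangement
`𝒜 = {H 1, …, H n}` in `ℝ^ℓ` equals `(-1)^ℓ χ(𝒜, -1)`. -/
theorem card_chambers_eq_charPoly_eval {ℓ n : ℕ}
    (H : Fin n → Set (Fin ℓ → ℝ))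
    (hH : ∀ i, IsAffineHyperplane ℝ (H i))
    (hinj : Function.Injective H) :
    (Nat.card (chambersOf H) : ℤ)
      = (-1 : ℤ) ^ ℓ * (charPoly ℝ Set.univ H).eval (-1) := by
  choose α b hα hHeq using hH
  have hWH : ∀ i, ¬ (Set.univ : Set (Fin ℓ → ℝ)) ⊆ H i := by
    intro i hsub
    obtain ⟨x, hx⟩ := exists_not_level (hα i) (b i)
    have := hsub (Set.mem_univ x)
    rw [hHeq i] at this
    exact hx this
  have hW : (Set.univ : Set (Fin ℓ → ℝ)).Nonempty := ⟨0, trivial⟩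
  rw [chambers_eq_cells α b H hHeq, eval_charPoly hW hWH]
  have hmain := zMain α b (Finset.univ : Finset (Fin n)) ⊤
    (by rw [AffineSubspace.top_coe]; exact Set.univ_nonempty)
  have hdir : Module.finrank ℝ (⊤ : AffineSubspace ℝ (Fin ℓ → ℝ)).direction = ℓ := by
    rw [AffineSubspace.direction_top, finrank_top, Module.finrank_fin_fun]
  rw [AffineSubspace.top_coe, Finset.powerset_univ, hdir] at hmain
  simp only [Set.univ_inter] at hmain
  simp only [hHeq, Set.univ_inter]
  rw [hmain, Finset.mul_sum, Finset.sum_filter]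
  apply Finset.sum_congr rfl
  intro B _
  by_cases hne : (⋂ i ∈ B, {x | α i x = b i} : Set (Fin ℓ → ℝ)).Nonempty
  · rw [if_pos hne, if_pos hne,
      show B.card + ℓ + affDim ℝ (⋂ i ∈ B, {x | α i x = b i} : Set (Fin ℓ → ℝ))
        = ℓ + (B.card + affDim ℝ (⋂ i ∈ B, {x | α i x = b i} : Set (Fin ℓ → ℝ))) by ring,
      pow_add]
  · rw [if_neg hne, if_neg hne]
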